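/- arXiv:2201.13076 — 2 statements merged into one kernel-verified Lean document; each statement's English description precedes it below -/
import Mathlib

section
/- Let d ≥ 1. For every δ > 0 there exists C > 0 such that for all (x,y) in the global region G₁ with x ≠ 0 and y ≠ 0, one has sup_{0<s<1} s^{−d/2} e^{−(δ/s) Q_s(x,y)} ≤ C min{ (1+|x|)^d, (|x| sin θ(x,y))^{−d} }. -/
open MeasureTheory Matrix
open scoped ENNReal InnerProductSpace

noncomputable section

/-- The squared Euclidean norm `|x|²` on `ℝ^d`. -/
def nrm2 {d : ℕ} (x : Fin d → ℝ) : ℝ := ∑ i, x i ^ 2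

/-- The Euclidean norm `|x|` on `ℝ^d`. -/
def nrm {d : ℕ} (x : Fin d → ℝ) : ℝ := Real.sqrt (nrm2 x)

/-- The local region
`L_σ = {(x,y) : |x-y| ≤ σ min(1, |x+y|⁻¹)}`, written equivalently as
`|x-y| ≤ σ` and `|x-y|·|x+y| ≤ σ`. -/
def localRegion (d : ℕ) (σ : ℝ) : Set ((Fin d → ℝ) × (Fin d → ℝ)) :=
  {p | nrm (p.1 - p.2) ≤ σ ∧ nrm (p.1 - p.2) * nrm (p.1 + p.2) ≤ σ}

/-- The global region `G_σ = (ℝ^d × ℝ^d) \ L_σ`. -/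
def globalRegion (d : ℕ) (σ : ℝ) : Set ((Fin d → ℝ) × (Fin d → ℝ)) :=
  (localRegion d σ)ᶜ

/-- `sin θ(x,y)`, where `θ(x,y)` is the angle between `x` and `y`, i.e.
`cos θ(x,y) = ⟨x,y⟩/(|x||y|)`. -/
def sinAngle {d : ℕ} (x y : Fin d → ℝ) : ℝ :=
  Real.sin (Real.arccos ((∑ i, x i * y i) / (nrm x * nrm y)))

/-- The quadratic form `Q_s(x,y) = |(1+s)x - (1-s)y|²`. -/
def Qform {d : ℕ} (s : ℝ) (x y : Fin d → ℝ) : ℝ := ∑ i, ((1+s) * x i - (1-s) * y i) ^ 2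

namespace StAux
variable {d : ℕ}

def toE {d : ℕ} (x : Fin d → ℝ) : EuclideanSpace ℝ (Fin d) := (WithLp.equiv 2 _).symm x

lemma nrm2_eq (x : Fin d → ℝ) : nrm2 x = ‖toE x‖^2 := by
  rw [EuclideanSpace.norm_eq, Real.sq_sqrt (by positivity)]
  simp [nrm2, toE, sq_abs]

lemma nrm_eq (x : Fin d → ℝ) : nrm x = ‖toE x‖ := by
  rw [nrm, nrm2_eq, Real.sqrt_sq (norm_nonneg _)]

lemma nrm_nonneg (x : Fin d → ℝ) : 0 ≤ nrm x := Real.sqrt_nonneg _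
lemma nrm2_nonneg (x : Fin d → ℝ) : 0 ≤ nrm2 x := Finset.sum_nonneg fun i _ => sq_nonneg _

lemma nrm2_pos {x : Fin d → ℝ} (hx : x ≠ 0) : 0 < nrm2 x := by
  rcases (nrm2_nonneg x).lt_or_eq with h | h
  · exact h
  · exfalso; apply hx; funext i
    have h2 := (Finset.sum_eq_zero_iff_of_nonneg
      (fun i _ => sq_nonneg (x i))).mp h.symm i (Finset.mem_univ i)
    simpa using sq_eq_zero_iff.mp h2

lemma nrm_pos {x : Fin d → ℝ} (hx : x ≠ 0) : 0 < nrm x := Real.sqrt_pos.mpr (nrm2_pos hx)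
lemma nrm_sq (x : Fin d → ℝ) : nrm x ^ 2 = nrm2 x := Real.sq_sqrt (nrm2_nonneg x)

lemma nrm_sub_le (x y : Fin d → ℝ) : nrm (x - y) ≤ nrm x + nrm y := by
  rw [nrm_eq, nrm_eq, nrm_eq]
  exact norm_sub_le (toE x) (toE y)

lemma nrm_smul (c : ℝ) (x : Fin d → ℝ) : nrm (c • x) = |c| * nrm x := by
  rw [nrm_eq, nrm_eq]
  have : toE (c • x) = c • toE x := rfl
  rw [this, norm_smul, Real.norm_eq_abs]

lemma inner_toE (x y : Fin d → ℝ) : ⟪toE x, toE y⟫_ℝ = ∑ i, x i * y i := by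
  simp [toE, PiLp.inner_apply, RCLike.inner_apply]
  exact Finset.sum_congr rfl fun i _ => mul_comm _ _

lemma nrm2_toE (x : Fin d → ℝ) : ⟪toE x, toE x⟫_ℝ = nrm2 x := by
  rw [inner_toE]; simp [nrm2, sq]

lemma cauchy (x y : Fin d → ℝ) : (∑ i, x i * y i)^2 ≤ nrm2 x * nrm2 y := by
  have h := real_inner_mul_inner_self_le (toE x) (toE y)
  rw [inner_toE, nrm2_toE, nrm2_toE] at h
  simpa [sq] using h

lemma Qform_expand (s : ℝ) (x y : Fin d → ℝ) :
    Qform s x y = (1+s)^2 * nrm2 x - 2*(1+s)*(1-s) * (∑ i, x i * y i) + (1-s)^2 * nrm2 y := by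
  simp only [Qform, nrm2, Finset.mul_sum, ← Finset.sum_sub_distrib, ← Finset.sum_add_distrib]
  exact Finset.sum_congr rfl fun i _ => by ring

lemma Qform_nonneg (s : ℝ) (x y : Fin d → ℝ) : 0 ≤ Qform s x y :=
  Finset.sum_nonneg fun i _ => sq_nonneg _

/-- Key perpendicular bound: `Q_s ≥ |x|² - ⟨x,y⟩²/|y|²`. -/
lemma Qform_ge_perp {s : ℝ} (hs : 0 ≤ s) {d : ℕ} (x : Fin d → ℝ) {y : Fin d → ℝ} (hy : y ≠ 0) :
    nrm2 x - (∑ i, x i * y i)^2 / nrm2 y ≤ Qform s x y := by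
  have hN : 0 < nrm2 y := nrm2_pos hy
  set p := ∑ i, x i * y i
  set A := nrm2 x
  set N := nrm2 y
  have hD : p^2 / N * N = p^2 := div_mul_cancel₀ _ hN.ne'
  have hCS : p^2 ≤ A * N := cauchy x y
  rw [Qform_expand]
  nlinarith [sq_nonneg ((1+s)*p - (1-s)*N),
    mul_nonneg (by nlinarith : (0:ℝ) ≤ (1+s)^2 - 1) (by nlinarith : (0:ℝ) ≤ A*N - p^2), hN, hD, hs]

lemma sinAngle_nonneg (x y : Fin d → ℝ) : 0 ≤ sinAngle x y := by
  rw [sinAngle, Real.sin_arccos]; positivity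

lemma sinAngle_sq {x y : Fin d → ℝ} (hx : x ≠ 0) (hy : y ≠ 0) :
    (nrm x * sinAngle x y)^2 = nrm2 x - (∑ i, x i * y i)^2 / nrm2 y := by
  have hX := nrm_pos hx
  have hY := nrm_pos hy
  set p := ∑ i, x i * y i
  have ht2 : (p / (nrm x * nrm y))^2 ≤ 1 := by
    rw [div_pow, mul_pow, nrm_sq, nrm_sq, div_le_one (mul_pos (nrm2_pos hx) (nrm2_pos hy))]
    exact cauchy x y
  rw [sinAngle, Real.sin_arccos, mul_pow,
    Real.sq_sqrt (by nlinarith : (0:ℝ) ≤ 1 - (p / (nrm x * nrm y))^2)]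
  have hq : (p / (nrm x * nrm y))^2 = p^2/(nrm2 x * nrm2 y) := by
    rw [div_pow, mul_pow, nrm_sq, nrm_sq]
  rw [hq, nrm_sq]
  have h2x := (nrm2_pos hx).ne'
  have h2y := (nrm2_pos hy).ne'
  field_simp

lemma exp_bound' (d : ℕ) {v : ℝ} (hv : 0 ≤ v) :
    v ^ ((d:ℝ)/2) * Real.exp (-v) ≤ (d.factorial : ℝ) := by
  have hfac : (1:ℝ) ≤ d.factorial := by
    exact_mod_cast Nat.one_le_iff_ne_zero.mpr (Nat.factorial_ne_zero d)
  rcases le_or_gt v 1 with h | h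
  · refine le_trans ?_ hfac
    have h1 : v ^ ((d:ℝ)/2) ≤ 1 := Real.rpow_le_one hv h (by positivity)
    have h2 : Real.exp (-v) ≤ 1 := Real.exp_le_one_iff.mpr (by linarith)
    calc v ^ ((d:ℝ)/2) * Real.exp (-v) ≤ 1 * 1 :=
          mul_le_mul h1 h2 (Real.exp_nonneg _) zero_le_one
      _ = 1 := one_mul 1
  · have h1 : v ^ ((d:ℝ)/2) ≤ v ^ (d:ℝ) :=
      Real.rpow_le_rpow_of_exponent_le h.le
        (by have : (0:ℝ) ≤ (d:ℝ) := Nat.cast_nonneg d; linarith)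
    have h2 : v ^ (d:ℝ) = v ^ d := Real.rpow_natCast v d
    have h3 : v ^ d ≤ (d.factorial : ℝ) * Real.exp v := by
      have h4 := Real.pow_div_factorial_le_exp (x := v) hv d
      rw [div_le_iff₀ (by positivity)] at h4
      linarith [h4]
    calc v ^ ((d:ℝ)/2) * Real.exp (-v) ≤ v ^ d * Real.exp (-v) := by
          apply mul_le_mul_of_nonneg_right (by rw [← h2]; exact h1) (Real.exp_nonneg _)
      _ ≤ (d.factorial : ℝ) * Real.exp v * Real.exp (-v) := by
          apply mul_le_mul_of_nonneg_right h3 (Real.exp_nonneg _)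
      _ = (d.factorial : ℝ) := by rw [mul_assoc, ← Real.exp_add]; simp

lemma rpow_half_sq {M : ℝ} (hM : 0 < M) (d : ℕ) : (M^2) ^ ((d:ℝ)/2) = M ^ d := by
  rw [← Real.rpow_natCast M 2, ← Real.rpow_mul hM.le,
    show ((2:ℕ):ℝ) * ((d:ℝ)/2) = (d:ℝ) by push_cast; ring, Real.rpow_natCast]

lemma trichotomy_arith' {s X M A B nu : ℝ} (hs0 : 0 < s) (hX0 : 0 ≤ X) (hM : M = 1 + X)
    (hA0 : 0 ≤ A) (hB0 : 0 ≤ B) (hnu0 : 0 ≤ nu)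
    (hF1 : A ≤ nu + s * B) (hF2 : B ≤ 2 * X + A)
    (hcase : s * M^2 < 1/8) (hA1' : A < 1) (hAB : 1 < A * B) :
    1 ≤ nu^2 * (16 * M^2) := by
  have hM1 : 1 ≤ M := by rw [hM]; linarith
  have hM0 : 0 < M := by linarith
  have hApos : 0 < A := by nlinarith
  have hBpos : 0 < B := by nlinarith
  have hB2M : B ≤ 2 * M := by rw [hM]; linarith
  rcases le_or_gt (s * B) (A / 2) with hsmall | hbig
  · have h6 : 1 < A * (2 * M) :=
      lt_of_lt_of_le hAB (mul_le_mul_of_nonneg_left hB2M hApos.le)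
    have h7 : A ≤ 2 * nu := by linarith
    have h8 : 1 < nu * (4 * M) := by
      nlinarith [mul_le_mul_of_nonneg_right h7 (by linarith : (0:ℝ) ≤ 2*M)]
    have h9 : 1 < (nu * (4 * M))^2 := by nlinarith [h8]
    nlinarith [h9]
  · exfalso
    have h9 : (A/2) * B < (s*B) * B := mul_lt_mul_of_pos_right hbig hBpos
    have h10 : 1/2 < s * B^2 := by nlinarith [h9]
    have hBB : B^2 ≤ (2*M)^2 := pow_le_pow_left₀ hB0 hB2M 2
    nlinarith [mul_le_mul_of_nonneg_left hBB hs0.le]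


/-- Pure real arithmetic core of the trichotomy. -/
lemma trichotomy_arith {s X M A B nu : ℝ} (hs0 : 0 < s) (hX0 : 0 ≤ X) (hM : M = 1 + X)
    (hA0 : 0 ≤ A) (hB0 : 0 ≤ B) (hnu0 : 0 ≤ nu)
    (hF1 : A ≤ nu + s * B) (hF2 : B ≤ 2 * X + A)
    (hG : 1 < A ∨ 1 < A * B) (hcase : s * M^2 < 1/8) :
    1 ≤ nu^2 * (16 * M^2) := by
  have hM1 : 1 ≤ M := by rw [hM]; linarith
  have hM0 : 0 < M := by linarith
  have hs8 : s < 1/8 := by nlinarith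
  have hsX : s * X < 1/8 := by nlinarith
  have hsB : s * B ≤ s * (2 * X + A) := mul_le_mul_of_nonneg_left hF2 hs0.le
  have hbigA : 1 ≤ A → 1 ≤ nu^2 * (16 * M^2) := by
    intro hA1
    have h5 : (1-s) * A ≥ (1-s) * 1 := by nlinarith
    have hnu58 : 5/8 ≤ nu := by nlinarith
    have h58 : 5/8 ≤ nu * M := by nlinarith [mul_le_mul_of_nonneg_left hM1 hnu0]
    have hsq : (5/8:ℝ)^2 ≤ (nu*M)^2 := pow_le_pow_left₀ (by norm_num) h58 2
    nlinarith [hsq]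
  rcases hG with hA1 | hAB
  · exact hbigA hA1.le
  rcases le_or_gt 1 A with hA1' | hA1'
  · exact hbigA hA1'
  exact trichotomy_arith' hs0 hX0 hM hA0 hB0 hnu0 hF1 hF2 hcase hA1' hAB
  
/-- Trichotomy on the global region. -/
lemma trichotomy {s : ℝ} (hs0 : 0 < s) {x y : Fin d → ℝ}
    (hG : 1 < nrm (x - y) ∨ 1 < nrm (x - y) * nrm (x + y)) :
    1/8 ≤ s * (1 + nrm x)^2 ∨ 1/(16 * (1 + nrm x)^2) ≤ Qform s x y := by
  by_cases hcase : 1/8 ≤ s * (1 + nrm x)^2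
  · exact Or.inl hcase
  right
  push_neg at hcase
  have hxM : (0:ℝ) < 1 + nrm x := by linarith [nrm_nonneg x]
  have hF1 : nrm (x - y) ≤ nrm (fun i => (1+s)*x i - (1-s)*y i) + s * nrm (x + y) := by
    have hxy : x - y = (fun i => (1+s)*x i - (1-s)*y i) - s • (x + y) := by
      funext i
      simp [Pi.smul_apply, smul_eq_mul]
      ring
    calc nrm (x - y) = nrm ((fun i => (1+s)*x i - (1-s)*y i) - s • (x + y)) := by rw [← hxy]
      _ ≤ nrm (fun i => (1+s)*x i - (1-s)*y i) + nrm (s • (x + y)) := nrm_sub_le _ _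
      _ = nrm (fun i => (1+s)*x i - (1-s)*y i) + s * nrm (x + y) := by
          rw [nrm_smul, abs_of_pos hs0]
  have hF2 : nrm (x + y) ≤ 2 * nrm x + nrm (x - y) := by
    have hxy : x + y = (2:ℝ) • x - (x - y) := by funext i; simp; ring
    calc nrm (x + y) = nrm ((2:ℝ) • x - (x - y)) := by rw [← hxy]
      _ ≤ nrm ((2:ℝ) • x) + nrm (x - y) := nrm_sub_le _ _
      _ = 2 * nrm x + nrm (x - y) := by rw [nrm_smul]; norm_num
  have key := trichotomy_arith hs0 (nrm_nonneg x) rfl (nrm_nonneg (x - y)) (nrm_nonneg (x + y))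
    (nrm_nonneg (fun i => (1+s)*x i - (1-s)*y i)) hF1 hF2 hG hcase
  have hQ : nrm (fun i => (1+s)*x i - (1-s)*y i) ^ 2 = Qform s x y := nrm_sq _
  rw [hQ] at key
  rw [div_le_iff₀ (by positivity)]
  linarith [key]

lemma boundA (d : ℕ) {δ s : ℝ} (hδ : 0 < δ) (hs0 : 0 < s) {x y : Fin d → ℝ}
    (hG : 1 < nrm (x - y) ∨ 1 < nrm (x - y) * nrm (x + y)) :
    s ^ (-(d:ℝ)/2) * Real.exp (-(δ/s) * Qform s x y) ≤
      (8^((d:ℝ)/2) + (d.factorial : ℝ) * (16/δ)^((d:ℝ)/2)) * (1 + nrm x)^d := by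
  have hM0 : (0:ℝ) < 1 + nrm x := by linarith [nrm_nonneg x]
  have hQ0 : 0 ≤ Qform s x y := Qform_nonneg s x y
  have hsneg : s ^ (-(d:ℝ)/2) = (s ^ ((d:ℝ)/2))⁻¹ := by
    rw [neg_div, Real.rpow_neg hs0.le]
  have hfac0 : (0:ℝ) ≤ (d.factorial : ℝ) := Nat.cast_nonneg _
  rcases trichotomy hs0 hG with h | h
  · -- s (1+|x|)² ≥ 1/8
    have hexp : Real.exp (-(δ/s) * Qform s x y) ≤ 1 := by
      rw [Real.exp_le_one_iff]
      have h2 : 0 ≤ δ/s * Qform s x y := mul_nonneg (by positivity) hQ0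
      linarith
    have hsle : s⁻¹ ≤ 8 * (1 + nrm x)^2 := by
      rw [inv_eq_one_div, div_le_iff₀ hs0]
      nlinarith
    calc s ^ (-(d:ℝ)/2) * Real.exp (-(δ/s) * Qform s x y)
        ≤ s ^ (-(d:ℝ)/2) * 1 :=
          mul_le_mul_of_nonneg_left hexp (Real.rpow_nonneg hs0.le _)
      _ = (s⁻¹) ^ ((d:ℝ)/2) := by
          rw [mul_one, hsneg, Real.inv_rpow hs0.le]
      _ ≤ (8 * (1 + nrm x)^2) ^ ((d:ℝ)/2) :=
          Real.rpow_le_rpow (inv_nonneg.mpr hs0.le) hsle (by positivity)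
      _ = 8^((d:ℝ)/2) * (1 + nrm x)^d := by
          rw [Real.mul_rpow (by norm_num) (by positivity), rpow_half_sq hM0]
      _ ≤ _ := by
          apply mul_le_mul_of_nonneg_right _ (pow_nonneg hM0.le d)
          have h3 : (0:ℝ) ≤ (d.factorial : ℝ) * (16/δ)^((d:ℝ)/2) := by positivity
          linarith
  · -- Q ≥ 1/(16(1+|x|)²)
    have hQpos : 0 < Qform s x y := lt_of_lt_of_le (by positivity) h
    have hv : 0 < δ/s * Qform s x y := by positivity
    have hvpow : 0 < (δ/s * Qform s x y)^((d:ℝ)/2) := Real.rpow_pos_of_pos hv _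
    have hexp : Real.exp (-(δ/s * Qform s x y)) ≤
        (d.factorial : ℝ) * ((δ/s * Qform s x y)^((d:ℝ)/2))⁻¹ := by
      rw [← div_eq_mul_inv, le_div_iff₀ hvpow]
      have h4 := exp_bound' d hv.le
      linarith [h4]
    have hbase : δ/(16 * (1 + nrm x)^2) ≤ δ * Qform s x y := by
      have h5 : δ * (1/(16 * (1 + nrm x)^2)) ≤ δ * Qform s x y :=
        mul_le_mul_of_nonneg_left h hδ.le
      calc δ/(16 * (1 + nrm x)^2) = δ * (1/(16 * (1 + nrm x)^2)) := by ring
        _ ≤ δ * Qform s x y := h5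
    calc s ^ (-(d:ℝ)/2) * Real.exp (-(δ/s) * Qform s x y)
        = (s ^ ((d:ℝ)/2))⁻¹ * Real.exp (-(δ/s * Qform s x y)) := by
          rw [hsneg, neg_mul]
      _ ≤ (s ^ ((d:ℝ)/2))⁻¹ * ((d.factorial : ℝ) * ((δ/s * Qform s x y)^((d:ℝ)/2))⁻¹) :=
          mul_le_mul_of_nonneg_left hexp (inv_nonneg.mpr (Real.rpow_nonneg hs0.le _))
      _ = (d.factorial : ℝ) * ((s * (δ/s * Qform s x y))^((d:ℝ)/2))⁻¹ := by
          rw [Real.mul_rpow hs0.le hv.le, mul_inv]; ring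
      _ = (d.factorial : ℝ) * ((δ * Qform s x y)^((d:ℝ)/2))⁻¹ := by
          rw [show s * (δ/s * Qform s x y) = δ * Qform s x y by field_simp]
      _ ≤ (d.factorial : ℝ) * ((δ/(16 * (1 + nrm x)^2))^((d:ℝ)/2))⁻¹ := by
          apply mul_le_mul_of_nonneg_left _ hfac0
          apply inv_anti₀ (Real.rpow_pos_of_pos (by positivity) _)
          exact Real.rpow_le_rpow (by positivity) hbase (by positivity)
      _ = (d.factorial : ℝ) * ((16 * (1 + nrm x)^2)/δ)^((d:ℝ)/2) := by
          rw [← Real.inv_rpow (by positivity), inv_div]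
      _ = (d.factorial : ℝ) * ((16/δ)^((d:ℝ)/2) * (1 + nrm x)^d) := by
          rw [show (16 * (1 + nrm x)^2)/δ = (16/δ) * (1 + nrm x)^2 by ring,
            Real.mul_rpow (by positivity) (by positivity), rpow_half_sq hM0]
      _ ≤ _ := by
          have h6 : (0:ℝ) ≤ 8^((d:ℝ)/2) := by positivity
          have h7 : (0:ℝ) ≤ (1 + nrm x)^d := pow_nonneg hM0.le d
          have h8 : (0:ℝ) ≤ (d.factorial : ℝ) * (16/δ)^((d:ℝ)/2) := by positivity
          nlinarith [mul_nonneg h6 h7]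

lemma boundB (d : ℕ) {δ s : ℝ} (hδ : 0 < δ) (hs0 : 0 < s) {x y : Fin d → ℝ}
    (hx : x ≠ 0) (hy : y ≠ 0) (hr : 0 < nrm x * sinAngle x y) :
    s ^ (-(d:ℝ)/2) * Real.exp (-(δ/s) * Qform s x y) ≤
      (d.factorial : ℝ) * (1/δ)^((d:ℝ)/2) * ((nrm x * sinAngle x y)^d)⁻¹ := by
  have hsneg : s ^ (-(d:ℝ)/2) = (s ^ ((d:ℝ)/2))⁻¹ := by
    rw [neg_div, Real.rpow_neg hs0.le]
  have hQr : (nrm x * sinAngle x y)^2 ≤ Qform s x y := by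
    rw [sinAngle_sq hx hy]
    exact Qform_ge_perp hs0.le x hy
  have hw : 0 < δ/s * (nrm x * sinAngle x y)^2 := by positivity
  have hwpow : 0 < (δ/s * (nrm x * sinAngle x y)^2)^((d:ℝ)/2) := Real.rpow_pos_of_pos hw _
  have hexp1 : Real.exp (-(δ/s) * Qform s x y) ≤
      Real.exp (-(δ/s * (nrm x * sinAngle x y)^2)) := by
    apply Real.exp_le_exp.mpr
    have h1 : δ/s * (nrm x * sinAngle x y)^2 ≤ δ/s * Qform s x y :=
      mul_le_mul_of_nonneg_left hQr (by positivity)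
    nlinarith
  have hexp2 : Real.exp (-(δ/s * (nrm x * sinAngle x y)^2)) ≤
      (d.factorial : ℝ) * ((δ/s * (nrm x * sinAngle x y)^2)^((d:ℝ)/2))⁻¹ := by
    rw [← div_eq_mul_inv, le_div_iff₀ hwpow]
    have h4 := exp_bound' d hw.le
    linarith [h4]
  calc s ^ (-(d:ℝ)/2) * Real.exp (-(δ/s) * Qform s x y)
      ≤ (s ^ ((d:ℝ)/2))⁻¹ * ((d.factorial : ℝ) * ((δ/s * (nrm x * sinAngle x y)^2)^((d:ℝ)/2))⁻¹) := by
        rw [hsneg]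
        apply mul_le_mul_of_nonneg_left (le_trans hexp1 hexp2)
          (inv_nonneg.mpr (Real.rpow_nonneg hs0.le _))
    _ = (d.factorial : ℝ) * ((s * (δ/s * (nrm x * sinAngle x y)^2))^((d:ℝ)/2))⁻¹ := by
        rw [Real.mul_rpow hs0.le hw.le, mul_inv]; ring
    _ = (d.factorial : ℝ) * ((δ * (nrm x * sinAngle x y)^2)^((d:ℝ)/2))⁻¹ := by
        rw [show s * (δ/s * (nrm x * sinAngle x y)^2) = δ * (nrm x * sinAngle x y)^2 by
          field_simp]
    _ = (d.factorial : ℝ) * (1/δ)^((d:ℝ)/2) * ((nrm x * sinAngle x y)^d)⁻¹ := by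
        rw [Real.mul_rpow hδ.le (by positivity), rpow_half_sq hr, mul_inv,
          ← Real.inv_rpow hδ.le, one_div, mul_assoc]

end StAux

open StAux

/-- For every `δ > 0` there exists `C > 0` such that, on the global region `G₁` (for
`x ≠ 0 ≠ y`),  `sup_{0<s<1} s^{-d/2} e^{-(δ/s) Q_s(x,y)} ≤ C min{(1+|x|)^d, (|x| sin θ(x,y))^{-d}}`.
The minimum is computed in `ℝ≥0∞` so that `(|x| sin θ(x,y))^{-d} = ∞` when `sin θ(x,y) = 0`. -/
theorem statement8 (d : ℕ) (hd : 1 ≤ d) (δ : ℝ) (hδ : 0 < δ) :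
    ∃ C > 0, ∀ x y : Fin d → ℝ, (x, y) ∈ globalRegion d 1 → x ≠ 0 → y ≠ 0 →
      ∀ s : ℝ, s ∈ Set.Ioo (0:ℝ) 1 →
        ENNReal.ofReal (s ^ (-(d : ℝ)/2) * Real.exp (-(δ/s) * Qform s x y)) ≤
          ENNReal.ofReal C *
            min (ENNReal.ofReal ((1 + nrm x) ^ d))
              ((ENNReal.ofReal (nrm x * sinAngle x y)) ^ d)⁻¹ := by
  set C : ℝ := 8^((d:ℝ)/2) + (d.factorial : ℝ) * (16/δ)^((d:ℝ)/2)
      + (d.factorial : ℝ) * (1/δ)^((d:ℝ)/2) with hCdef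
  have hC : 0 < C := by positivity
  refine ⟨C, hC, ?_⟩
  intro x y hG hx hy s hs
  obtain ⟨hs0, hs1⟩ := hs
  have hG' : 1 < nrm (x - y) ∨ 1 < nrm (x - y) * nrm (x + y) := by
    simp only [globalRegion, Set.mem_compl_iff, localRegion, Set.mem_setOf_eq,
      not_and_or, not_le] at hG
    exact hG
  have hM0 : (0:ℝ) < 1 + nrm x := by linarith [nrm_nonneg x]
  have hCA : 8^((d:ℝ)/2) + (d.factorial : ℝ) * (16/δ)^((d:ℝ)/2) ≤ C := by
    have : (0:ℝ) ≤ (d.factorial : ℝ) * (1/δ)^((d:ℝ)/2) := by positivity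
    rw [hCdef]; linarith
  have hCB : (d.factorial : ℝ) * (1/δ)^((d:ℝ)/2) ≤ C := by
    have h1 : (0:ℝ) ≤ 8^((d:ℝ)/2) := by positivity
    have h2 : (0:ℝ) ≤ (d.factorial : ℝ) * (16/δ)^((d:ℝ)/2) := by positivity
    rw [hCdef]; linarith
  have bound1 : ENNReal.ofReal (s ^ (-(d:ℝ)/2) * Real.exp (-(δ/s) * Qform s x y)) ≤
      ENNReal.ofReal C * ENNReal.ofReal ((1 + nrm x) ^ d) := by
    rw [← ENNReal.ofReal_mul hC.le]
    apply ENNReal.ofReal_le_ofReal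
    calc s ^ (-(d:ℝ)/2) * Real.exp (-(δ/s) * Qform s x y)
        ≤ (8^((d:ℝ)/2) + (d.factorial : ℝ) * (16/δ)^((d:ℝ)/2)) * (1 + nrm x)^d :=
          boundA d hδ hs0 hG'
      _ ≤ C * (1 + nrm x)^d :=
          mul_le_mul_of_nonneg_right hCA (pow_nonneg hM0.le d)
  have bound2 : ENNReal.ofReal (s ^ (-(d:ℝ)/2) * Real.exp (-(δ/s) * Qform s x y)) ≤
      ENNReal.ofReal C * ((ENNReal.ofReal (nrm x * sinAngle x y)) ^ d)⁻¹ := by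
    have hr0 : 0 ≤ nrm x * sinAngle x y :=
      mul_nonneg (nrm_nonneg x) (sinAngle_nonneg x y)
    rcases hr0.eq_or_lt with hr | hr
    · have hz : (ENNReal.ofReal (nrm x * sinAngle x y)) ^ d = 0 := by
        rw [← hr]; simp [pow_eq_zero_iff (by omega : d ≠ 0)]
      rw [hz, ENNReal.inv_zero, ENNReal.mul_top (by
        simp [ENNReal.ofReal_eq_zero]; linarith)]
      exact le_top
    · rw [← ENNReal.ofReal_pow hr0, ← ENNReal.ofReal_inv_of_pos (pow_pos hr d),
        ← ENNReal.ofReal_mul hC.le]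
      apply ENNReal.ofReal_le_ofReal
      calc s ^ (-(d:ℝ)/2) * Real.exp (-(δ/s) * Qform s x y)
          ≤ (d.factorial : ℝ) * (1/δ)^((d:ℝ)/2) * ((nrm x * sinAngle x y)^d)⁻¹ :=
            boundB d hδ hs0 hx hy hr
        _ ≤ C * ((nrm x * sinAngle x y)^d)⁻¹ :=
            mul_le_mul_of_nonneg_right hCB (inv_nonneg.mpr (pow_nonneg hr0 d))
  rcases le_total (ENNReal.ofReal ((1 + nrm x) ^ d))
      (((ENNReal.ofReal (nrm x * sinAngle x y)) ^ d)⁻¹) with h | h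
  · rw [min_eq_left h]; exact bound1
  · rw [min_eq_right h]; exact bound2
end
end

section
/- Let k ∈ ℕ and ρ > 2. There exists C > 0 such that for every a > 0, the function F_a(t) = t^{k+1} ∂_t^k ( t e^{−t²/(4a)} ) satisfies: (i) sup_{t>0} |F_a(t)| ≤ C a; (ii) ( ∫₀^∞ |F_a(t)|² dt/t )^{1/2} ≤ C a; (iii) V_ρ(F_a) ≤ C a. -/
open MeasureTheory Matrix
open scoped ENNReal
open scoped NNReal

noncomputable section

/-- The `ρ`-variation of a function `g` on `(0,∞)`:
the supremum over all finite decreasing sequences `t₁ > t₂ > … > t_ℓ > 0` of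
`(Σ ‖g(t_{n+1}) - g(t_n)‖^ρ)^{1/ρ}`. -/
def varOp {E : Type*} [NormedAddCommGroup E] (ρ : ℝ) (g : ℝ → E) : ℝ≥0∞ :=
  ⨆ (ℓ : ℕ) (t : Fin (ℓ+1) → ℝ) (_ : StrictAnti t) (_ : ∀ i, 0 < t i),
    ENNReal.ofReal ((∑ n : Fin ℓ, ‖g (t n.succ) - g (t n.castSucc)‖ ^ ρ) ^ (1/ρ))

/-- The function `F_a(t) = t^{k+1} ∂_t^k (t e^{-t²/(4a)})`. -/
def Fsubord (k : ℕ) (a : ℝ) (t : ℝ) : ℝ :=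
  t ^ (k+1) * iteratedDeriv k (fun s => s * Real.exp (-(s^2)/(4*a))) t


lemma gaussHasDeriv (p : Polynomial ℝ) {a : ℝ} (ha : 0 < a) (t : ℝ) :
    HasDerivAt (fun t : ℝ => p.eval (t / Real.sqrt a) * Real.exp (-(t^2)/(4*a)))
      ((Real.sqrt a)⁻¹ * ((p.derivative - Polynomial.C (1/2) * (Polynomial.X * p)).eval
          (t / Real.sqrt a) * Real.exp (-(t^2)/(4*a)))) t := by
  have hs : (0:ℝ) < Real.sqrt a := Real.sqrt_pos.2 ha
  have hs2 : Real.sqrt a * Real.sqrt a = a := Real.mul_self_sqrt ha.le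
  have h1 : HasDerivAt (fun t : ℝ => p.eval (t / Real.sqrt a))
      (Polynomial.eval (t / Real.sqrt a) p.derivative * (Real.sqrt a)⁻¹) t := by
    have h0 : HasDerivAt (fun t : ℝ => t / Real.sqrt a) (Real.sqrt a)⁻¹ t := by
      simpa [div_eq_mul_inv] using (hasDerivAt_id t).div_const (Real.sqrt a)
    exact (p.hasDerivAt (t / Real.sqrt a)).comp t h0
  have h2 : HasDerivAt (fun t : ℝ => -(t^2)/(4*a)) (-(2*t)/(4*a)) t := by
    have := ((hasDerivAt_pow 2 t).neg).div_const (4*a)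
    simpa using this
  have h3 := h2.exp
  have h4 := h1.mul h3
  refine h4.congr_deriv ?_
  simp only [Polynomial.eval_sub, Polynomial.eval_mul, Polynomial.eval_C, Polynomial.eval_X]
  have hE : Real.exp (-(t^2)/(4*a)) = Real.exp (-(t^2)/(4*a)) := rfl
  have e2 : Real.sqrt a ^ 2 = a := Real.sq_sqrt ha.le
  have e3 : Real.sqrt a ^ 3 = a * Real.sqrt a := by
    rw [pow_succ, e2]
  field_simp
  ring_nf
  rw [e2]
  ring

lemma iter_formula (k : ℕ) : ∃ p : Polynomial ℝ, ∀ a : ℝ, 0 < a → ∀ t : ℝ,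
    iteratedDeriv k (fun s => s * Real.exp (-(s^2)/(4*a))) t
      = (Real.sqrt a)⁻¹ ^ k * Real.sqrt a *
          (p.eval (t / Real.sqrt a) * Real.exp (-(t^2)/(4*a))) := by
  induction k with
  | zero =>
    refine ⟨Polynomial.X, fun a ha t => ?_⟩
    have hs : (0:ℝ) < Real.sqrt a := Real.sqrt_pos.2 ha
    simp only [iteratedDeriv_zero, pow_zero, one_mul, Polynomial.eval_X]
    field_simp
  | succ k ih =>
    obtain ⟨p, hp⟩ := ih
    refine ⟨p.derivative - Polynomial.C (1/2) * (Polynomial.X * p), fun a ha t => ?_⟩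
    have hs : (0:ℝ) < Real.sqrt a := Real.sqrt_pos.2 ha
    have hfun : iteratedDeriv k (fun s => s * Real.exp (-(s^2)/(4*a)))
        = fun t => (Real.sqrt a)⁻¹ ^ k * Real.sqrt a *
            (p.eval (t / Real.sqrt a) * Real.exp (-(t^2)/(4*a))) := funext (hp a ha)
    rw [iteratedDeriv_succ, hfun]
    have hd := ((gaussHasDeriv p ha t).const_mul ((Real.sqrt a)⁻¹ ^ k * Real.sqrt a)).deriv
    rw [hd]
    rw [pow_succ]
    ring

lemma poly_bound (p : Polynomial ℝ) : ∃ B : ℝ, 0 < B ∧ ∀ u : ℝ, 0 ≤ u →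
    |p.eval u| ≤ B * Real.exp (u^2/8) := by
  refine ⟨(∑ i ∈ Finset.range (p.natDegree + 1), |p.coeff i| * (i.factorial : ℝ)) *
      Real.exp 2 + 1, by positivity, fun u hu => ?_⟩
  have h1 : |p.eval u| ≤ ∑ i ∈ Finset.range (p.natDegree + 1), |p.coeff i| * u ^ i := by
    rw [Polynomial.eval_eq_sum_range]
    refine (Finset.abs_sum_le_sum_abs _ _).trans ?_
    refine Finset.sum_le_sum fun i _ => ?_
    rw [abs_mul, abs_pow, abs_of_nonneg hu]
  have h2 : ∀ i : ℕ, u ^ i ≤ (i.factorial : ℝ) * (Real.exp 2 * Real.exp (u^2/8)) := by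
    intro i
    have hfac : (0:ℝ) < (i.factorial : ℝ) := by exact_mod_cast i.factorial_pos
    have hpf : u ^ i / (i.factorial : ℝ) ≤ Real.exp u := Real.pow_div_factorial_le_exp u hu i
    have hue : Real.exp u ≤ Real.exp 2 * Real.exp (u^2/8) := by
      rw [← Real.exp_add]
      apply Real.exp_le_exp.2
      nlinarith [sq_nonneg (u - 4)]
    calc u ^ i = (i.factorial : ℝ) * (u ^ i / (i.factorial : ℝ)) := by field_simp
      _ ≤ (i.factorial : ℝ) * (Real.exp u) := by
          exact mul_le_mul_of_nonneg_left hpf hfac.le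
      _ ≤ (i.factorial : ℝ) * (Real.exp 2 * Real.exp (u^2/8)) :=
          mul_le_mul_of_nonneg_left hue hfac.le
  have h3 : ∑ i ∈ Finset.range (p.natDegree + 1), |p.coeff i| * u ^ i ≤
      (∑ i ∈ Finset.range (p.natDegree + 1), |p.coeff i| * (i.factorial : ℝ)) *
        (Real.exp 2 * Real.exp (u^2/8)) := by
    rw [Finset.sum_mul]
    refine Finset.sum_le_sum fun i _ => ?_
    rw [mul_assoc]
    exact mul_le_mul_of_nonneg_left (h2 i) (abs_nonneg _)
  have hexp1 : (1:ℝ) ≤ Real.exp (u^2/8) := Real.one_le_exp (by positivity)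
  calc |p.eval u| ≤ _ := h1
    _ ≤ _ := h3
    _ ≤ ((∑ i ∈ Finset.range (p.natDegree + 1), |p.coeff i| * (i.factorial : ℝ)) *
          Real.exp 2 + 1) * Real.exp (u^2/8) := by
        rw [add_mul, one_mul, mul_assoc]
        nlinarith

lemma t_exp_le {a : ℝ} (ha : 0 < a) {t : ℝ} (ht : 0 ≤ t) :
    t * Real.exp (-(t^2)/(4*a)) ≤ Real.sqrt (8*a) * Real.exp (-(1/(8*a)) * t^2) := by
  have hs : (0:ℝ) < Real.sqrt (8*a) := Real.sqrt_pos.2 (by positivity)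
  have hs2 : Real.sqrt (8*a) * Real.sqrt (8*a) = 8*a := Real.mul_self_sqrt (by positivity)
  have h1 : t^2/(8*a) + 1 ≤ Real.exp (t^2/(8*a)) := Real.add_one_le_exp _
  have key : t ≤ Real.sqrt (8*a) * Real.exp (t^2/(8*a)) := by
    have h2 := mul_le_mul_of_nonneg_left h1 hs.le
    have h3 : Real.sqrt (8*a) * (t^2/(8*a) + 1) =
        Real.sqrt (8*a) * t^2/(8*a) + Real.sqrt (8*a) := by ring
    have h5 : 8*a*(t^2/(8*a)) = t^2 := by field_simp
    nlinarith [sq_nonneg (t - Real.sqrt (8*a)), mul_nonneg ht hs.le, hs2, h5]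
  calc t * Real.exp (-(t^2)/(4*a))
      ≤ (Real.sqrt (8*a) * Real.exp (t^2/(8*a))) * Real.exp (-(t^2)/(4*a)) :=
        mul_le_mul_of_nonneg_right key (Real.exp_pos _).le
    _ = Real.sqrt (8*a) * Real.exp (-(1/(8*a)) * t^2) := by
        rw [mul_assoc, ← Real.exp_add]
        congr 1
        field_simp
        ring

lemma add_rpow_le {x y ρ : ℝ} (hx : 0 ≤ x) (hy : 0 ≤ y) (hρ : 1 ≤ ρ) :
    x ^ ρ + y ^ ρ ≤ (x + y) ^ ρ := by
  have := NNReal.add_rpow_le_rpow_add (⟨x, hx⟩ : ℝ≥0) (⟨y, hy⟩ : ℝ≥0) hρ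
  exact_mod_cast this

lemma sum_rpow_le {ρ : ℝ} (hρ : 1 ≤ ρ) {ι : Type*} [DecidableEq ι] (s : Finset ι)
    (x : ι → ℝ) (hx : ∀ i, 0 ≤ x i) :
    (∑ i ∈ s, x i ^ ρ) ≤ (∑ i ∈ s, x i) ^ ρ := by
  induction s using Finset.cons_induction with
  | empty => simp [Real.zero_rpow (by linarith : ρ ≠ 0)]
  | cons i s hni ih =>
    rw [Finset.sum_cons, Finset.sum_cons]
    calc x i ^ ρ + ∑ j ∈ s, x j ^ ρ ≤ x i ^ ρ + (∑ j ∈ s, x j) ^ ρ := by linarith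
      _ ≤ (x i + ∑ j ∈ s, x j) ^ ρ :=
          add_rpow_le (hx i) (Finset.sum_nonneg fun j _ => hx j) hρ

set_option maxHeartbeats 2000000 in
/-- There exists `C > 0` such that, for every `a > 0`, the function
`F_a(t) = t^{k+1} ∂_t^k (t e^{-t²/(4a)})` satisfies `sup_{t>0}|F_a(t)| ≤ C a`,
`(∫₀^∞ |F_a(t)|² dt/t)^{1/2} ≤ C a` and `V_ρ(F_a) ≤ C a`. -/
theorem statement12 (k : ℕ) (ρ : ℝ) (hρ : 2 < ρ) :
    ∃ C > 0, ∀ a : ℝ, 0 < a →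
      (∀ t : ℝ, 0 < t → |Fsubord k a t| ≤ C * a) ∧
      (∫⁻ t in Set.Ioi (0:ℝ), ENNReal.ofReal ((Fsubord k a t) ^ 2 / t)) ^ ((1:ℝ)/2)
        ≤ ENNReal.ofReal (C * a) ∧
      varOp ρ (Fsubord k a) ≤ ENNReal.ofReal (C * a) := by

  obtain ⟨p, hp⟩ := iter_formula k
  set P : Polynomial ℝ := Polynomial.X ^ (k+1) * p with hPdef
  set R : Polynomial ℝ := Polynomial.X ^ k * p with hRdef
  set Q : Polynomial ℝ := P.derivative - Polynomial.C (1/2) * (Polynomial.X * P) with hQdef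
  obtain ⟨BP, hBP, hPB⟩ := poly_bound P
  obtain ⟨BR, hBR, hRB⟩ := poly_bound R
  obtain ⟨BQ, hBQ, hQB⟩ := poly_bound Q
  refine ⟨BP + 3*BR + 3*BQ, by positivity, fun a ha => ?_⟩
  have hρ0 : (0:ℝ) < ρ := by linarith
  have hs : (0:ℝ) < Real.sqrt a := Real.sqrt_pos.2 ha
  have hs2 : Real.sqrt a * Real.sqrt a = a := Real.mul_self_sqrt ha.le
  have hinv : Real.sqrt a * (Real.sqrt a)⁻¹ = 1 := mul_inv_cancel₀ hs.ne'
  have hu2 : ∀ t : ℝ, (t / Real.sqrt a)^2 = t^2/a := by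
    intro t; rw [div_pow, Real.sq_sqrt ha.le]
  have hPe : ∀ u : ℝ, P.eval u = u^(k+1) * p.eval u := by
    intro u; rw [hPdef]; simp [Polynomial.eval_mul, Polynomial.eval_pow]
  -- closed formula for F
  have hF : ∀ t : ℝ, Fsubord k a t
      = a * (P.eval (t / Real.sqrt a) * Real.exp (-(t^2)/(4*a))) := by
    intro t
    rw [Fsubord, hp a ha t, hPe]
    have hscale : t^(k+1) * ((Real.sqrt a)⁻¹^k * Real.sqrt a)
        = a * (t/Real.sqrt a)^(k+1) := by
      rw [div_pow]
      field_simp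
      rw [_root_.one_div_pow, pow_succ]
      have hk : Real.sqrt a ^ k ≠ 0 := by positivity
      field_simp
      linear_combination (t^k * t * (Real.sqrt a)^k) * hs2
    linear_combination (Polynomial.eval (t / Real.sqrt a) p * Real.exp (-(t^2)/(4*a))) * hscale
  -- derivative of F
  have hFfun : Fsubord k a = fun t => a * (P.eval (t / Real.sqrt a) * Real.exp (-(t^2)/(4*a))) :=
    funext hF
  have hF' : ∀ t : ℝ, HasDerivAt (Fsubord k a)
      (a * ((Real.sqrt a)⁻¹ * (Q.eval (t / Real.sqrt a) * Real.exp (-(t^2)/(4*a))))) t := by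
    intro t
    rw [hFfun]
    exact (gaussHasDeriv P ha t).const_mul a
  set G : ℝ → ℝ := fun t =>
      a * ((Real.sqrt a)⁻¹ * (Q.eval (t / Real.sqrt a) * Real.exp (-(t^2)/(4*a)))) with hGdef
  have hGcont : Continuous G := by
    apply continuous_const.mul
    apply continuous_const.mul
    exact (Q.continuous.comp (continuous_id.div_const _)).mul
      (Real.continuous_exp.comp ((continuous_pow 2).neg.div_const _))
  have hGb : ∀ t : ℝ, 0 ≤ t → |G t| ≤ (Real.sqrt a * BQ) * Real.exp (-(1/(8*a)) * t^2) := by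
    intro t ht
    have hu : 0 ≤ t / Real.sqrt a := by positivity
    have h1 := hQB _ hu
    have habs : |G t| = a * ((Real.sqrt a)⁻¹ *
        (|Q.eval (t / Real.sqrt a)| * Real.exp (-(t^2)/(4*a)))) := by
      rw [hGdef]
      rw [abs_mul, abs_mul, abs_mul, abs_of_nonneg ha.le,
        abs_of_nonneg (inv_nonneg.2 hs.le), abs_of_nonneg (Real.exp_pos _).le]
    rw [habs]
    have h2 : a * ((Real.sqrt a)⁻¹ * (|Q.eval (t / Real.sqrt a)| * Real.exp (-(t^2)/(4*a))))
        ≤ a * ((Real.sqrt a)⁻¹ *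
          ((BQ * Real.exp ((t / Real.sqrt a)^2/8)) * Real.exp (-(t^2)/(4*a)))) := by
      gcongr
    refine h2.trans (le_of_eq ?_)
    have hexp : Real.exp ((t / Real.sqrt a)^2/8) * Real.exp (-(t^2)/(4*a))
        = Real.exp (-(1/(8*a)) * t^2) := by
      rw [← Real.exp_add]
      congr 1
      rw [hu2]
      field_simp
      ring
    calc a * ((Real.sqrt a)⁻¹ * ((BQ * Real.exp ((t / Real.sqrt a)^2/8)) *
            Real.exp (-(t^2)/(4*a))))
        = a * (Real.sqrt a)⁻¹ * BQ *
            (Real.exp ((t / Real.sqrt a)^2/8) * Real.exp (-(t^2)/(4*a))) := by ring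
      _ = a * (Real.sqrt a)⁻¹ * BQ * Real.exp (-(1/(8*a)) * t^2) := by rw [hexp]
      _ = (Real.sqrt a * BQ) * Real.exp (-(1/(8*a)) * t^2) := by
          have : a * (Real.sqrt a)⁻¹ = Real.sqrt a := by
            field_simp
            exact (Real.sq_sqrt ha.le).symm
          rw [this]
  -- Part (i)
  have part1 : ∀ t : ℝ, 0 < t → |Fsubord k a t| ≤ (BP + 3*BR + 3*BQ) * a := by
    intro t ht
    have hu : 0 ≤ t / Real.sqrt a := by positivity
    have h1 := hPB _ hu
    rw [hF t, abs_mul, abs_mul, abs_of_nonneg ha.le, abs_of_nonneg (Real.exp_pos _).le]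
    have h2 : Real.exp ((t / Real.sqrt a)^2/8) * Real.exp (-(t^2)/(4*a)) ≤ 1 := by
      rw [← Real.exp_add, Real.exp_le_one_iff]
      rw [hu2]
      have : t^2/a/8 + -(t^2)/(4*a) = -(t^2/(8*a)) := by field_simp; ring
      rw [this]
      have : 0 ≤ t^2/(8*a) := by positivity
      linarith
    calc a * (|P.eval (t / Real.sqrt a)| * Real.exp (-(t^2)/(4*a)))
        ≤ a * ((BP * Real.exp ((t / Real.sqrt a)^2/8)) * Real.exp (-(t^2)/(4*a))) := by gcongr
      _ = (a * BP) * (Real.exp ((t / Real.sqrt a)^2/8) * Real.exp (-(t^2)/(4*a))) := by ring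
      _ ≤ (a * BP) * 1 := by
          exact mul_le_mul_of_nonneg_left h2 (by positivity)
      _ ≤ (BP + 3*BR + 3*BQ) * a := by nlinarith
  -- Gaussian integrability
  have gint : IntegrableOn (fun t : ℝ => Real.exp (-(1/(8*a)) * t^2)) (Set.Ioi 0) :=
    (integrable_exp_neg_mul_sq (by positivity)).integrableOn
  have hGint : IntegrableOn G (Set.Ioi 0) := by
    refine Integrable.mono' (gint.const_mul (Real.sqrt a * BQ)) hGcont.aestronglyMeasurable ?_
    refine (ae_restrict_iff' measurableSet_Ioi).2 (Filter.Eventually.of_forall fun t ht => ?_)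
    simpa [Real.norm_eq_abs] using hGb t (le_of_lt ht)
  have hpi8 : Real.pi/(1/(8*a)) = 8*Real.pi*a := by field_simp
  -- total variation integral bound
  have hItot : ∫ t in Set.Ioi (0:ℝ), |G t| ≤ 3 * BQ * a := by
    have h1 : ∫ t in Set.Ioi (0:ℝ), |G t|
        ≤ ∫ t in Set.Ioi (0:ℝ), (Real.sqrt a * BQ) * Real.exp (-(1/(8*a)) * t^2) :=
      setIntegral_mono_on hGint.abs (gint.const_mul _) measurableSet_Ioi
        (fun t htt => hGb t (le_of_lt htt))
    have h2 : ∫ t in Set.Ioi (0:ℝ), (Real.sqrt a * BQ) * Real.exp (-(1/(8*a)) * t^2)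
        = (Real.sqrt a * BQ) * (Real.sqrt (8*Real.pi*a)/2) := by
      rw [MeasureTheory.integral_const_mul, integral_gaussian_Ioi, hpi8]
    have h4 : Real.sqrt (8*Real.pi*a) ≤ 6 * Real.sqrt a := by
      have h36 : (8*Real.pi*a) ≤ 36*a := by nlinarith [Real.pi_le_four]
      calc Real.sqrt (8*Real.pi*a) ≤ Real.sqrt (36*a) := Real.sqrt_le_sqrt h36
        _ = 6 * Real.sqrt a := by
            rw [show (36:ℝ)*a = (6:ℝ)^2*a by norm_num, Real.sqrt_mul (by positivity) a,
              Real.sqrt_sq (by norm_num)]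
    have h5 : (Real.sqrt a * BQ) * (Real.sqrt (8*Real.pi*a)/2) ≤ 3 * BQ * a := by
      have h6 := mul_le_mul_of_nonneg_left h4 (show (0:ℝ) ≤ Real.sqrt a * BQ / 2 by positivity)
      nlinarith [hs2, hs.le, hBQ.le]
    linarith [h1, h2 ▸ h1]
  -- Part (iii)
  have part3 : varOp ρ (Fsubord k a) ≤ ENNReal.ofReal ((BP + 3*BR + 3*BQ) * a) := by
    unfold varOp
    refine iSup_le fun ℓ => iSup_le fun t => iSup_le fun hanti => iSup_le fun hpos => ?_
    refine ENNReal.ofReal_le_ofReal ?_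
    set D : Fin ℓ → ℝ := fun n => ‖Fsubord k a (t n.succ) - Fsubord k a (t n.castSucc)‖ with hDdef
    have hD0 : ∀ n, 0 ≤ D n := fun n => norm_nonneg _
    have step1 : (∑ n : Fin ℓ, D n ^ ρ) ^ (1/ρ) ≤ ∑ n : Fin ℓ, D n := by
      have hsum := sum_rpow_le (by linarith : (1:ℝ) ≤ ρ) Finset.univ D hD0
      have hnn : 0 ≤ ∑ n : Fin ℓ, D n := Finset.sum_nonneg fun i _ => hD0 i
      calc (∑ n : Fin ℓ, D n ^ ρ) ^ (1/ρ)
          ≤ ((∑ n : Fin ℓ, D n) ^ ρ) ^ (1/ρ) :=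
            Real.rpow_le_rpow (Finset.sum_nonneg fun i _ => Real.rpow_nonneg (hD0 i) ρ)
              hsum (by positivity)
        _ = ∑ n : Fin ℓ, D n := by
            rw [← Real.rpow_mul hnn, mul_one_div, div_self hρ0.ne', Real.rpow_one]
    have hseg : ∀ n : Fin ℓ, D n ≤ ∫ x in Set.Ioc (t n.succ) (t n.castSucc), |G x| := by
      intro n
      have hlt : t n.succ < t n.castSucc := hanti (Fin.castSucc_lt_succ (i := n))
      have hftc : ∫ x in (t n.succ)..(t n.castSucc), G x
          = Fsubord k a (t n.castSucc) - Fsubord k a (t n.succ) :=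
        intervalIntegral.integral_eq_sub_of_hasDerivAt (fun x _ => hF' x)
          (hGcont.intervalIntegrable _ _)
      calc D n = |∫ x in (t n.succ)..(t n.castSucc), G x| := by
            rw [hftc, hDdef]
            simp [Real.norm_eq_abs, abs_sub_comm]
        _ ≤ ∫ x in (t n.succ)..(t n.castSucc), |G x| :=
            intervalIntegral.abs_integral_le_integral_abs hlt.le
        _ = ∫ x in Set.Ioc (t n.succ) (t n.castSucc), |G x| :=
            intervalIntegral.integral_of_le hlt.le
    have hdisj : Set.Pairwise ↑(Finset.univ : Finset (Fin ℓ))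
        (Function.onFun Disjoint (fun n : Fin ℓ => Set.Ioc (t n.succ) (t n.castSucc))) := by
      have key : ∀ i j : Fin ℓ, i < j →
          Disjoint (Set.Ioc (t i.succ) (t i.castSucc)) (Set.Ioc (t j.succ) (t j.castSucc)) := by
        intro i j hij
        have hle : i.succ ≤ j.castSucc := by
          rw [Fin.lt_def] at hij
          rw [Fin.le_def]
          simpa using hij
        have := hanti.antitone hle
        rw [Set.Ioc_disjoint_Ioc]
        exact le_trans (min_le_right _ _) (le_trans this (le_max_left _ _))
      intro i _ j _ hij
      rcases lt_or_gt_of_ne hij with h | h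
      · exact key i j h
      · exact (key j i h).symm
    have hsub : (⋃ n ∈ (Finset.univ : Finset (Fin ℓ)), Set.Ioc (t n.succ) (t n.castSucc))
        ⊆ Set.Ioi (0:ℝ) := by
      intro x hx
      simp only [Set.mem_iUnion] at hx
      obtain ⟨n, _, hn⟩ := hx
      exact lt_trans (hpos n.succ) hn.1
    have step2 : ∑ n : Fin ℓ, D n ≤ ∫ x in Set.Ioi (0:ℝ), |G x| := by
      calc ∑ n : Fin ℓ, D n
          ≤ ∑ n : Fin ℓ, ∫ x in Set.Ioc (t n.succ) (t n.castSucc), |G x| :=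
            Finset.sum_le_sum fun n _ => hseg n
        _ = ∫ x in ⋃ n ∈ (Finset.univ : Finset (Fin ℓ)),
              Set.Ioc (t n.succ) (t n.castSucc), |G x| :=
            (MeasureTheory.integral_biUnion_finset Finset.univ
              (fun n _ => measurableSet_Ioc) hdisj
              (fun n _ => (hGcont.abs.integrableOn_Ioc))).symm
        _ ≤ ∫ x in Set.Ioi (0:ℝ), |G x| :=
            setIntegral_mono_set hGint.abs
              (Filter.Eventually.of_forall fun x => abs_nonneg _)
              (HasSubset.Subset.eventuallyLE hsub)
    calc (∑ n : Fin ℓ, D n ^ ρ) ^ (1/ρ) ≤ ∑ n : Fin ℓ, D n := step1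
      _ ≤ ∫ x in Set.Ioi (0:ℝ), |G x| := step2
      _ ≤ 3 * BQ * a := hItot
      _ ≤ (BP + 3*BR + 3*BQ) * a := by nlinarith
  -- Part (ii)
  have hPR : P = Polynomial.X * R := by rw [hPdef, hRdef, pow_succ]; ring
  have hpt : ∀ t : ℝ, t ∈ Set.Ioi (0:ℝ) →
      ENNReal.ofReal (Fsubord k a t ^ 2 / t)
        ≤ ENNReal.ofReal ((a * BR^2 * Real.sqrt (8*a)) * Real.exp (-(1/(8*a)) * t^2)) := by
    intro t ht
    have htp : (0:ℝ) < t := ht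
    apply ENNReal.ofReal_le_ofReal
    have hu : 0 ≤ t / Real.sqrt a := by positivity
    have hRv := hRB _ hu
    have hu2t : (t / Real.sqrt a)^2 = t^2/a := hu2 t
    have hkey : Fsubord k a t ^ 2 ≤ (a * BR^2) * (t^2 * Real.exp (-(t^2)/(4*a))) := by
      rw [hF t, hPR]
      simp only [Polynomial.eval_mul, Polynomial.eval_X]
      have e1 : (a * ((t / Real.sqrt a) * R.eval (t / Real.sqrt a) * Real.exp (-(t^2)/(4*a))))^2
          = (a^2 * (t / Real.sqrt a)^2) *
            ((R.eval (t / Real.sqrt a))^2 * (Real.exp (-(t^2)/(4*a)))^2) := by ring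
      have e2 : a^2 * (t^2/a) = a * t^2 := by field_simp
      have e3 : (R.eval (t / Real.sqrt a))^2
          ≤ BR^2 * (Real.exp ((t / Real.sqrt a)^2/8))^2 := by
        calc (R.eval (t / Real.sqrt a))^2 = |R.eval (t / Real.sqrt a)|^2 := (sq_abs _).symm
          _ ≤ (BR * Real.exp ((t / Real.sqrt a)^2/8))^2 :=
              pow_le_pow_left₀ (abs_nonneg _) hRv 2
          _ = BR^2 * (Real.exp ((t / Real.sqrt a)^2/8))^2 := by ring
      have e4 : (Real.exp ((t / Real.sqrt a)^2/8))^2 * (Real.exp (-(t^2)/(4*a)))^2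
          = Real.exp (-(t^2)/(4*a)) := by
        rw [← Real.exp_nat_mul, ← Real.exp_nat_mul, ← Real.exp_add]
        congr 1
        rw [hu2t]
        field_simp
        ring
      calc (a * ((t / Real.sqrt a) * R.eval (t / Real.sqrt a) * Real.exp (-(t^2)/(4*a))))^2
          = (a^2 * (t / Real.sqrt a)^2) *
              ((R.eval (t / Real.sqrt a))^2 * (Real.exp (-(t^2)/(4*a)))^2) := e1
        _ ≤ (a^2 * (t / Real.sqrt a)^2) *
              ((BR^2 * (Real.exp ((t / Real.sqrt a)^2/8))^2) *
                (Real.exp (-(t^2)/(4*a)))^2) := by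
            gcongr
        _ = (a * t^2) * (BR^2 * ((Real.exp ((t / Real.sqrt a)^2/8))^2 *
              (Real.exp (-(t^2)/(4*a)))^2)) := by
            rw [hu2t, e2]
            ring
        _ = (a * BR^2) * (t^2 * Real.exp (-(t^2)/(4*a))) := by rw [e4]; ring
    have hdiv : Fsubord k a t ^ 2 / t ≤ (a * BR^2) * (t * Real.exp (-(t^2)/(4*a))) := by
      rw [div_le_iff₀ htp]
      calc Fsubord k a t ^ 2 ≤ (a * BR^2) * (t^2 * Real.exp (-(t^2)/(4*a))) := hkey
        _ = (a * BR^2) * (t * Real.exp (-(t^2)/(4*a))) * t := by ring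
    calc Fsubord k a t ^ 2 / t ≤ (a * BR^2) * (t * Real.exp (-(t^2)/(4*a))) := hdiv
      _ ≤ (a * BR^2) * (Real.sqrt (8*a) * Real.exp (-(1/(8*a)) * t^2)) :=
          mul_le_mul_of_nonneg_left (t_exp_le ha htp.le) (by positivity)
      _ = (a * BR^2 * Real.sqrt (8*a)) * Real.exp (-(1/(8*a)) * t^2) := by ring
  have hbint : IntegrableOn
      (fun t : ℝ => (a * BR^2 * Real.sqrt (8*a)) * Real.exp (-(1/(8*a)) * t^2))
      (Set.Ioi 0) := gint.const_mul _
  have hbmeas : Measurable (fun t : ℝ =>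
      ENNReal.ofReal ((a * BR^2 * Real.sqrt (8*a)) * Real.exp (-(1/(8*a)) * t^2))) := by
    apply Measurable.ennreal_ofReal
    exact (continuous_const.mul
      (Real.continuous_exp.comp (continuous_const.mul (continuous_pow 2)))).measurable
  have hintval : ∫ t in Set.Ioi (0:ℝ),
      (a * BR^2 * Real.sqrt (8*a)) * Real.exp (-(1/(8*a)) * t^2) ≤ (3 * BR * a)^2 := by
    rw [MeasureTheory.integral_const_mul, integral_gaussian_Ioi, hpi8]
    have m1 : Real.sqrt (8*a) * Real.sqrt (8*Real.pi*a) = Real.sqrt ((8*a)*(8*Real.pi*a)) :=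
      (Real.sqrt_mul (by positivity) _).symm
    have m2 : Real.sqrt ((8*a)*(8*Real.pi*a)) ≤ 18 * a := by
      calc Real.sqrt ((8*a)*(8*Real.pi*a)) ≤ Real.sqrt ((18*a)^2) :=
          Real.sqrt_le_sqrt (by nlinarith [Real.pi_le_four, ha.le])
        _ = 18 * a := Real.sqrt_sq (by positivity)
    have hm : Real.sqrt (8*a) * Real.sqrt (8*Real.pi*a) ≤ 18 * a := m1 ▸ m2
    nlinarith [mul_le_mul_of_nonneg_left hm (show (0:ℝ) ≤ a * BR^2 / 2 by positivity),
      Real.sqrt_nonneg (8*Real.pi*a), Real.sqrt_nonneg (8*a), hBR.le, ha.le]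
  have part2 : (∫⁻ t in Set.Ioi (0:ℝ), ENNReal.ofReal ((Fsubord k a t) ^ 2 / t)) ^ ((1:ℝ)/2)
      ≤ ENNReal.ofReal ((BP + 3*BR + 3*BQ) * a) := by
    have l1 : (∫⁻ t in Set.Ioi (0:ℝ), ENNReal.ofReal ((Fsubord k a t) ^ 2 / t))
        ≤ ∫⁻ t in Set.Ioi (0:ℝ),
            ENNReal.ofReal ((a * BR^2 * Real.sqrt (8*a)) * Real.exp (-(1/(8*a)) * t^2)) :=
      setLIntegral_mono hbmeas hpt
    have l2 : ∫⁻ t in Set.Ioi (0:ℝ),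
        ENNReal.ofReal ((a * BR^2 * Real.sqrt (8*a)) * Real.exp (-(1/(8*a)) * t^2))
        = ENNReal.ofReal (∫ t in Set.Ioi (0:ℝ),
            (a * BR^2 * Real.sqrt (8*a)) * Real.exp (-(1/(8*a)) * t^2)) :=
      (MeasureTheory.ofReal_integral_eq_lintegral_ofReal hbint
        (Filter.Eventually.of_forall fun t => by positivity)).symm
    calc (∫⁻ t in Set.Ioi (0:ℝ), ENNReal.ofReal ((Fsubord k a t) ^ 2 / t)) ^ ((1:ℝ)/2)
        ≤ (ENNReal.ofReal ((3 * BR * a)^2)) ^ ((1:ℝ)/2) := by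
          refine ENNReal.rpow_le_rpow ?_ (by norm_num)
          calc (∫⁻ t in Set.Ioi (0:ℝ), ENNReal.ofReal ((Fsubord k a t) ^ 2 / t))
              ≤ ∫⁻ t in Set.Ioi (0:ℝ), ENNReal.ofReal
                  ((a * BR^2 * Real.sqrt (8*a)) * Real.exp (-(1/(8*a)) * t^2)) := l1
            _ = ENNReal.ofReal (∫ t in Set.Ioi (0:ℝ),
                  (a * BR^2 * Real.sqrt (8*a)) * Real.exp (-(1/(8*a)) * t^2)) := l2
            _ ≤ ENNReal.ofReal ((3 * BR * a)^2) := ENNReal.ofReal_le_ofReal hintval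
      _ = ENNReal.ofReal (3 * BR * a) := by
          rw [ENNReal.ofReal_rpow_of_nonneg (by positivity) (by norm_num)]
          congr 1
          rw [← Real.rpow_natCast (3 * BR * a) 2, ← Real.rpow_mul (by positivity)]
          norm_num
      _ ≤ ENNReal.ofReal ((BP + 3*BR + 3*BQ) * a) :=
          ENNReal.ofReal_le_ofReal (by nlinarith)
  exact ⟨part1, part2, part3⟩
end
end
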